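/- Let Ω ⊆ ℝⁿ be an open set (n ≥ 3), m ≥ 2, M ≥ 0, C > 0, 0 < β ≤ 1. Let (ε_k) be a sequence of positive real numbers converging to 0, and for each k let u_1^k,…,u_m^k be twice continuously differentiable functions on Ω such that for all i, k and all x, y ∈ Ω: 0 ≤ u_i^k(x) ≤ M, |u_i^k(x) − u_i^k(y)| ≤ C·|x − y|^β, and Δu_i^k(x) = (1/ε_k)·∏_{j=1}^m u_j^k(x). Suppose that for each i the sequence u_i^k converges pointwise on Ω to a function u_i as k → ∞. Then ∏_{i=1}^m u_i(x) = 0 for every x ∈ Ω. -/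

import Mathlib

open MeasureTheory Metric Finset
open Filter

/-- The Laplace operator: sum of pure second partial derivatives
(trace of the second derivative). -/
noncomputable def laplacian {n : ℕ} (u : EuclideanSpace ℝ (Fin n) → ℝ)
    (x : EuclideanSpace ℝ (Fin n)) : ℝ :=
  ∑ i, iteratedFDeriv ℝ 2 u x ![EuclideanSpace.single i 1, EuclideanSpace.single i 1]

/-- Second derivative test at a local max (one dimension). -/
lemma aux_snd_deriv_nonpos {g g' : ℝ → ℝ} {c : ℝ}
    (hg : ∀ᶠ t in nhds (0:ℝ), HasDerivAt g (g' t) t)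
    (hg' : HasDerivAt g' c 0) (hmax : IsLocalMax g 0) : c ≤ 0 := by
  by_contra hc
  push_neg at hc
  have hg'0 : g' 0 = 0 := hmax.hasDerivAt_eq_zero hg.self_of_nhds
  have hslope : Tendsto (slope g' 0) (nhdsWithin 0 {(0:ℝ)}ᶜ) (nhds c) :=
    hasDerivAt_iff_tendsto_slope.1 hg'
  have h1 : ∀ᶠ t in nhdsWithin (0:ℝ) {(0:ℝ)}ᶜ, 0 < slope g' 0 t :=
    hslope.eventually (lt_mem_nhds hc)
  have h2 : ∀ᶠ t in nhdsWithin (0:ℝ) {(0:ℝ)}ᶜ,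
      HasDerivAt g (g' t) t ∧ g t ≤ g 0 :=
    (hg.and hmax).filter_mono nhdsWithin_le_nhds
  obtain ⟨δ, hδ, hball⟩ := Metric.mem_nhdsWithin_iff.1 (h1.and h2)
  have hmem : ∀ t : ℝ, 0 < t → t < δ →
      (0 < slope g' 0 t ∧ (HasDerivAt g (g' t) t ∧ g t ≤ g 0)) := by
    intro t ht hlt
    exact hball ⟨by simpa [Real.dist_eq, abs_of_pos ht] using hlt, by simpa using ht.ne'⟩
  have hcont : ContinuousOn g (Set.Icc 0 (δ/2)) := by
    intro t ht
    rcases eq_or_lt_of_le ht.1 with h0 | h0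
    · subst h0
      exact hg.self_of_nhds.continuousAt.continuousWithinAt
    · exact ((hmem t h0 (lt_of_le_of_lt ht.2 (by linarith))).2.1.continuousAt).continuousWithinAt
  have hmono : StrictMonoOn g (Set.Icc 0 (δ/2)) := by
    apply strictMonoOn_of_hasDerivWithinAt_pos (convex_Icc _ _) hcont
    · intro t ht
      rw [interior_Icc] at ht
      exact ((hmem t ht.1 (by linarith [ht.2])).2.1.hasDerivWithinAt)
    · intro t ht
      rw [interior_Icc] at ht
      have hs := (hmem t ht.1 (by linarith [ht.2])).1
      rw [slope_def_field, hg'0] at hs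
      have : 0 < (g' t - 0) / (t - 0) := by
        simpa [div_eq_mul_inv] using hs
      have := (div_pos_iff.1 this)
      rcases this with ⟨h, _⟩ | ⟨_, h⟩
      · linarith
      · linarith [ht.1]
  have hlt : g 0 < g (δ/2) := by
    refine hmono ⟨le_refl 0, by linarith⟩ ⟨by linarith, le_refl _⟩ (by linarith)
  have := (hmem (δ/2) (by linarith) (by linarith)).2.2
  linarith

/-- Per-direction second derivative inequality at an interior local max. -/
lemma aux_dir {n : ℕ} {V : Set (EuclideanSpace ℝ (Fin n))} (hV : IsOpen V)
    {u : EuclideanSpace ℝ (Fin n) → ℝ} (hu : ContDiffOn ℝ 2 u V)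
    {x₀ z : EuclideanSpace ℝ (Fin n)} {c : ℝ} (hzV : z ∈ V)
    (hloc : IsLocalMax (fun y => u y + c * ‖y - x₀‖ ^ 2) z) (d : Fin n) :
    iteratedFDeriv ℝ 2 u z ![EuclideanSpace.single d 1, EuclideanSpace.single d 1]
      + c * 2 ≤ 0 := by
  set w : EuclideanSpace ℝ (Fin n) → ℝ := fun y => u y + c * ‖y - x₀‖ ^ 2 with hw
  set e := EuclideanSpace.single d (1:ℝ) with hedef
  have he : ‖e‖ = 1 := by simp [hedef]
  have hline : Continuous fun t : ℝ => z + t • e := by continuity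
  have hline0 : (fun t : ℝ => z + t • e) 0 = z := by simp
  have hlined : ∀ t : ℝ, HasDerivAt (fun s : ℝ => z + s • e) e t := fun t => by
    simpa using ((hasDerivAt_id t).smul_const e).const_add z
  set K := ‖z - x₀‖ ^ 2 with hK
  set I := (inner ℝ (z - x₀) e : ℝ) with hI
  set g : ℝ → ℝ := fun t => u (z + t • e) + c * ((K + 2 * I * t) + t ^ 2) with hgdef
  set g' : ℝ → ℝ := fun t => (fderiv ℝ u (z + t • e)) e + c * (2 * I + 2 * t) with hg'def
  have hgw : ∀ t : ℝ, w (z + t • e) = g t := by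
    intro t
    have hv : z + t • e - x₀ = (z - x₀) + t • e := by
      rw [add_sub_right_comm]
    have h2 : ‖(z - x₀) + t • e‖ ^ 2 = (K + 2 * I * t) + t ^ 2 := by
      rw [norm_add_sq_real, real_inner_smul_right, norm_smul, he, Real.norm_eq_abs,
        mul_one, sq_abs, ← hI, ← hK]
      ring
    simp only [hw, hgdef, hv, h2]
  have hz0 : z + (0:ℝ) • e = z := by simp
  have hmaxg : IsLocalMax g 0 := by
    have h : IsLocalMax (w ∘ fun t : ℝ => z + t • e) 0 :=
      IsLocalMax.comp_continuous (f := w) (g := fun t : ℝ => z + t • e) (b := (0:ℝ))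
        (show IsLocalMax w (z + (0:ℝ) • e) by rw [hz0]; exact hloc) hline.continuousAt
    have hcompeq : (w ∘ fun t : ℝ => z + t • e) = g := by
      funext t; simp only [Function.comp_apply]; exact hgw t
    rwa [hcompeq] at h
  have hevd : ∀ᶠ t in nhds (0:ℝ), HasDerivAt g (g' t) t := by
    have hevV : ∀ᶠ t in nhds (0:ℝ), z + t • e ∈ V := by
      apply hline.continuousAt.eventually_mem
      show V ∈ nhds (z + (0:ℝ) • e)
      rw [hz0]
      exact hV.mem_nhds hzV
    filter_upwards [hevV] with t ht
    have hdu : DifferentiableAt ℝ u (z + t • e) :=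
      (hu.contDiffAt (hV.mem_nhds ht)).differentiableAt (by norm_num)
    have h1 : HasDerivAt (fun s : ℝ => u (z + s • e)) ((fderiv ℝ u (z + t • e)) e) t := by
      have := hdu.hasFDerivAt.comp_hasDerivAt t (hlined t)
      simpa [Function.comp_def] using this
    have ha : HasDerivAt (fun s : ℝ => K + 2 * I * s) (2 * I) t := by
      simpa using ((hasDerivAt_id t).const_mul (2 * I)).const_add K
    have hb : HasDerivAt (fun s : ℝ => s ^ 2) (2 * t) t := by
      simpa using hasDerivAt_pow 2 t
    have hpoly : HasDerivAt (fun s : ℝ => c * ((K + 2 * I * s) + s ^ 2))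
        (c * (2 * I + 2 * t)) t := by
      simpa using (ha.add hb).const_mul c
    exact h1.add hpoly
  have hg'd : HasDerivAt g'
      (iteratedFDeriv ℝ 2 u z ![e, e] + c * 2) 0 := by
    have h2 : ContDiffAt ℝ 2 u z := hu.contDiffAt (hV.mem_nhds hzV)
    have hfd : DifferentiableAt ℝ (fderiv ℝ u) z :=
      (h2.fderiv_right (m := 1) (by norm_num)).differentiableAt (by norm_num)
    have hΨ : HasDerivAt (fun t : ℝ => fderiv ℝ u (z + t • e))
        (fderiv ℝ (fderiv ℝ u) z e) 0 := by
      have hfd' : HasFDerivAt (fderiv ℝ u) (fderiv ℝ (fderiv ℝ u) z) (z + (0:ℝ) • e) := by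
        rw [hz0]; exact hfd.hasFDerivAt
      have := hfd'.comp_hasDerivAt 0 (hlined 0)
      simpa [Function.comp_def] using this
    have happ := hΨ.clm_apply (hasDerivAt_const (0:ℝ) e)
    have happ' : HasDerivAt (fun t : ℝ => (fderiv ℝ u (z + t • e)) e)
        (fderiv ℝ (fderiv ℝ u) z e e) 0 := by
      simpa using happ
    have hpoly' : HasDerivAt (fun t : ℝ => c * (2 * I + 2 * t)) (c * 2) 0 := by
      simpa using (((hasDerivAt_id (0:ℝ)).const_mul 2).const_add (2 * I)).const_mul c
    have hsum := happ'.add hpoly'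
    have hiter : iteratedFDeriv ℝ 2 u z ![e, e] = fderiv ℝ (fderiv ℝ u) z e e := by
      rw [iteratedFDeriv_two_apply]
      simp
    rw [hiter]
    exact hsum
  exact aux_snd_deriv_nonpos hevd hg'd hmaxg

lemma aux_key {n : ℕ} (hn : 1 ≤ n) {V : Set (EuclideanSpace ℝ (Fin n))} (hV : IsOpen V)
    {u : EuclideanSpace ℝ (Fin n) → ℝ} (hu : ContDiffOn ℝ 2 u V)
    {x₀ : EuclideanSpace ℝ (Fin n)} {r M A : ℝ} (hr : 0 < r) (hM : 0 ≤ M)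
    (hsub : closedBall x₀ r ⊆ V)
    (hbd : ∀ x ∈ closedBall x₀ r, 0 ≤ u x ∧ u x ≤ M)
    (hlap : ∀ x ∈ closedBall x₀ r, A ≤ laplacian u x) :
    A ≤ 2 * n * M / r ^ 2 + 1 := by
  have hn0 : (0:ℝ) < (n:ℝ) := by exact_mod_cast Nat.pos_of_ne_zero (by omega)
  set c : ℝ := -(2 * n * M / r ^ 2 + 1) / (2 * n) with hc
  set w : EuclideanSpace ℝ (Fin n) → ℝ := fun y => u y + c * ‖y - x₀‖ ^ 2 with hw
  have hwc : ContinuousOn w (closedBall x₀ r) := by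
    apply ContinuousOn.add (hu.continuousOn.mono hsub)
    exact (Continuous.mul continuous_const
      ((continuous_norm.comp (continuous_id.sub continuous_const)).pow 2)).continuousOn
  obtain ⟨z, hz, hzmax⟩ := (isCompact_closedBall x₀ r).exists_isMaxOn
    ⟨x₀, mem_closedBall_self hr.le⟩ hwc
  by_cases hzb : z ∈ ball x₀ r
  · have hloc : IsLocalMax w z := hzmax.isLocalMax
      (mem_nhds_iff.2 ⟨ball x₀ r, ball_subset_closedBall, isOpen_ball, hzb⟩)
    have hdir := fun d => aux_dir hV hu (hsub hz) hloc d
    have hsum : laplacian u z + (n:ℝ) * (c * 2) ≤ 0 := by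
      have h := Finset.sum_nonpos (s := Finset.univ)
        (f := fun d : Fin n => iteratedFDeriv ℝ 2 u z
          ![EuclideanSpace.single d 1, EuclideanSpace.single d 1] + c * 2)
        (fun d _ => hdir d)
      rw [Finset.sum_add_distrib, Finset.sum_const, Finset.card_univ, Fintype.card_fin] at h
      simpa [laplacian, nsmul_eq_mul] using h
    have hA := hlap z hz
    have hcval : (n:ℝ) * (c * 2) = -(2 * n * M / r ^ 2 + 1) := by
      rw [hc]
      field_simp
    linarith
  · exfalso
    have hdist : dist z x₀ = r :=
      le_antisymm (mem_closedBall.1 hz) (not_lt.1 (by simpa [mem_ball] using hzb))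
    have h1 : w x₀ ≤ w z := isMaxOn_iff.1 hzmax x₀ (mem_closedBall_self hr.le)
    have hx0 : w x₀ = u x₀ := by simp [hw]
    have hzval : w z = u z + c * r ^ 2 := by
      rw [hw]
      simp only []
      rw [← dist_eq_norm, hdist]
    have hcr : c * r ^ 2 = -(M + r ^ 2 / (2 * n)) := by
      rw [hc]
      field_simp
    have h2 := (hbd x₀ (mem_closedBall_self hr.le)).1
    have h3 := (hbd z hz).2
    have h4 : 0 < r ^ 2 / (2 * (n:ℝ)) := by positivity
    linarith [hx0 ▸ hzval ▸ h1]


/-- Segregation in the singular limit: for uniformly bounded, uniformly Hölder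
continuous solutions of `Δu_i = (1/ε_k) · ∏_j u_j` with `ε_k → 0`, any pointwise
limit satisfies `∏_i u_i = 0` everywhere in `Ω`. -/
theorem stmt6 {n : ℕ} (hn : 3 ≤ n)
    (Ω : Set (EuclideanSpace ℝ (Fin n))) (hΩo : IsOpen Ω)
    (m : ℕ) (hm : 2 ≤ m) (M C β : ℝ) (hM : 0 ≤ M) (hC : 0 < C)
    (hβ0 : 0 < β) (hβ1 : β ≤ 1)
    (ε : ℕ → ℝ) (hε_pos : ∀ k, 0 < ε k)
    (hε_lim : Filter.Tendsto ε Filter.atTop (nhds 0))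
    (u : ℕ → Fin m → EuclideanSpace ℝ (Fin n) → ℝ)
    (hu_smooth : ∀ k i, ContDiffOn ℝ 2 (u k i) Ω)
    (hu_bd : ∀ k i, ∀ x ∈ Ω, 0 ≤ u k i x ∧ u k i x ≤ M)
    (hu_holder : ∀ k i, ∀ x ∈ Ω, ∀ y ∈ Ω,
      |u k i x - u k i y| ≤ C * ‖x - y‖ ^ β)
    (hu_eq : ∀ k i, ∀ x ∈ Ω,
      laplacian (u k i) x = (1 / ε k) * ∏ j, u k j x)
    (v : Fin m → EuclideanSpace ℝ (Fin n) → ℝ)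
    (hconv : ∀ i, ∀ x ∈ Ω,
      Filter.Tendsto (fun k => u k i x) Filter.atTop (nhds (v i x))) :
    ∀ x ∈ Ω, ∏ i, v i x = 0 := by
  intro x₀ hx₀
  have hv0 : ∀ i, 0 ≤ v i x₀ := fun i =>
    ge_of_tendsto' (hconv i x₀ hx₀) (fun k => (hu_bd k i x₀ hx₀).1)
  by_contra hne
  have hvi : ∀ i, 0 < v i x₀ := by
    intro i
    rcases (hv0 i).lt_or_eq with h | h
    · exact h
    · exact absurd (Finset.prod_eq_zero (Finset.mem_univ i) h.symm) hne
  have hmne : (Finset.univ : Finset (Fin m)).Nonempty := ⟨⟨0, by omega⟩, Finset.mem_univ _⟩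
  obtain ⟨i₀, -, hi₀⟩ := Finset.exists_min_image Finset.univ (fun i => v i x₀) hmne
  set δ := v i₀ x₀ with hδdef
  have hδ : 0 < δ := hvi i₀
  obtain ⟨r₀, hr₀, hball₀⟩ := Metric.isOpen_iff.1 hΩo x₀ hx₀
  set r : ℝ := min (r₀ / 2) ((δ / (4 * C)) ^ (β⁻¹)) with hrdef
  have hδC : 0 < δ / (4 * C) := by positivity
  have hr : 0 < r := lt_min (by linarith) (Real.rpow_pos_of_pos hδC _)
  have hsub : closedBall x₀ r ⊆ Ω := by
    intro y hy
    apply hball₀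
    rw [mem_ball]
    calc dist y x₀ ≤ r := mem_closedBall.1 hy
      _ ≤ r₀ / 2 := min_le_left _ _
      _ < r₀ := by linarith
  have hCr : C * r ^ β ≤ δ / 4 := by
    have h1 : r ^ β ≤ δ / (4 * C) := by
      calc r ^ β ≤ ((δ / (4 * C)) ^ (β⁻¹)) ^ β :=
          Real.rpow_le_rpow hr.le (min_le_right _ _) hβ0.le
        _ = δ / (4 * C) := Real.rpow_inv_rpow hδC.le hβ0.ne'
    calc C * r ^ β ≤ C * (δ / (4 * C)) := mul_le_mul_of_nonneg_left h1 hC.le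
      _ = δ / 4 := by field_simp
  have hev1 : ∀ j : Fin m, ∀ᶠ k in Filter.atTop, 3 * δ / 4 < u k j x₀ := by
    intro j
    have hlt : 3 * δ / 4 < v j x₀ := by
      have := hi₀ j (Finset.mem_univ j)
      linarith
    exact (hconv j x₀ hx₀).eventually (lt_mem_nhds hlt)
  have hteninv : Filter.Tendsto (fun k => (ε k)⁻¹) Filter.atTop Filter.atTop :=
    tendsto_inv_nhdsGT_zero.comp
      (tendsto_nhdsWithin_of_tendsto_nhds_of_eventually_within _ hε_lim
        (Filter.Eventually.of_forall fun k => hε_pos k))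
  set T : ℝ := (2 * n * M / r ^ 2 + 2) / (δ / 2) ^ m with hT
  have hev2 : ∀ᶠ k in Filter.atTop, T ≤ (ε k)⁻¹ := hteninv.eventually_ge_atTop T
  obtain ⟨k, hk1, hk2⟩ := ((Filter.eventually_all.2 hev1).and hev2).exists
  set A : ℝ := (δ / 2) ^ m * (ε k)⁻¹ with hA
  have hdm : (0:ℝ) < (δ / 2) ^ m := by positivity
  have hAgt : 2 * n * M / r ^ 2 + 1 < A := by
    have h1 : (δ / 2) ^ m * T ≤ A := mul_le_mul_of_nonneg_left hk2 hdm.le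
    have h2 : (δ / 2) ^ m * T = 2 * n * M / r ^ 2 + 2 := by
      rw [hT]
      field_simp
    linarith
  have hlap : ∀ x ∈ closedBall x₀ r, A ≤ laplacian (u k i₀) x := by
    intro x hx
    have hxΩ : x ∈ Ω := hsub hx
    have hfac : ∀ j : Fin m, δ / 2 ≤ u k j x := by
      intro j
      have hh := hu_holder k j x₀ hx₀ x hxΩ
      have hnorm : ‖x₀ - x‖ ≤ r := by
        rw [← dist_eq_norm, dist_comm]
        exact mem_closedBall.1 hx
      have hmono : C * ‖x₀ - x‖ ^ β ≤ C * r ^ β :=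
        mul_le_mul_of_nonneg_left (Real.rpow_le_rpow (norm_nonneg _) hnorm hβ0.le) hC.le
      have h3 : |u k j x₀ - u k j x| ≤ δ / 4 := le_trans hh (le_trans hmono hCr)
      have h5 : 3 * δ / 4 < u k j x₀ := hk1 j
      linarith [(abs_le.1 h3).2]
    have hprod : (δ / 2) ^ m ≤ ∏ j, u k j x := by
      calc (δ / 2) ^ m = ∏ _j : Fin m, (δ / 2) := by
            rw [Finset.prod_const, Finset.card_univ, Fintype.card_fin]
        _ ≤ ∏ j, u k j x :=
            Finset.prod_le_prod (fun j _ => by positivity) (fun j _ => hfac j)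
    rw [hu_eq k i₀ x hxΩ, one_div]
    calc A = (δ / 2) ^ m * (ε k)⁻¹ := rfl
      _ ≤ (∏ j, u k j x) * (ε k)⁻¹ :=
          mul_le_mul_of_nonneg_right hprod (inv_nonneg.2 (hε_pos k).le)
      _ = (ε k)⁻¹ * ∏ j, u k j x := mul_comm _ _
  have hkey := aux_key (by omega : 1 ≤ n) hΩo (hu_smooth k i₀) hr hM hsub
    (fun x hx => hu_bd k i₀ x (hsub hx)) hlap
  linarith
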